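/- Fix m, p, L, N ∈ ℕ, a data pair (u_d, y_d) of length T, an initial pair (u_ini, y_ini) of length T_ini, and a future input u_f : {0,…,T_f−1} → ℝ^m with T_f ≥ 1. Let ℓ ∈ ℕ be such that T_ini ≥ ℓ and ℓ(C',A') ≤ ℓ for every explaining system (n', A', B', C', D'). Suppose there exists y_f : {0,…,T_f−1} → ℝ^p such that for every t ∈ {0,…,T_f−1}, writing u^t = u_ini·(u_f(0),…,u_f(t−1)) and y^t = y_ini·(y_f(0),…,y_f(t−1)) (sequences of length T_ini+t), there exist vectors g₁ ∈ ℝ^{T−ℓ} (present only if T ≥ ℓ+1, otherwise omitted) and g₂ ∈ ℝ^{T_ini+t−ℓ} such that H_{ℓ+1}(u_d) g₁ + H_{ℓ+1}(u^t) g₂ equals the stacked vector (u^t(T_ini+t−ℓ), …, u^t(T_ini+t−1), u_f(t)) and H_{ℓ+1}(y_d) g₁ + H_{ℓ+1}(y^t) g₂ equals the stacked vector (y^t(T_ini+t−ℓ), …, y^t(T_ini+t−1), y_f(t)). Then for every explaining system (n', A', B', C', D'), the concatenation (u_ini·u_f, y_ini·y_f) is a trajectory of length T_ini+T_f of (A',B',C',D'),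 and for each explaining system y_f is the unique output with this property; in particular (u_d, y_d) is informative for unique prediction of u_f from (u_ini, y_ini). -/

import Mathlib

/-- `(u, y)` is a trajectory of length `T` of the linear system `(A, B, C, D)`. -/
def IsTraj {n m p : ℕ} (A : Matrix (Fin n) (Fin n) ℝ) (B : Matrix (Fin n) (Fin m) ℝ)
    (C : Matrix (Fin p) (Fin n) ℝ) (D : Matrix (Fin p) (Fin m) ℝ)
    (T : ℕ) (u : Fin T → Fin m → ℝ) (y : Fin T → Fin p → ℝ) : Prop :=
  ∃ x : Fin (T + 1) → Fin n → ℝ,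
    ∀ t : Fin T,
      x t.succ = A.mulVec (x t.castSucc) + B.mulVec (u t) ∧
      y t = C.mulVec (x t.castSucc) + D.mulVec (u t)

/-- Observability matrix of depth `k` of the pair `(C, A)`. -/
noncomputable def obsMat {n p : ℕ} (A : Matrix (Fin n) (Fin n) ℝ)
    (C : Matrix (Fin p) (Fin n) ℝ) (k : ℕ) : Matrix (Fin k × Fin p) (Fin n) ℝ :=
  fun ir j => (C * A ^ (ir.1 : ℕ)) ir.2 j

/-- The lag of the pair `(C, A)`: the least `k` with `rank O_k = rank O_{k+1}`. -/
noncomputable def lag {n p : ℕ} (A : Matrix (Fin n) (Fin n) ℝ)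
    (C : Matrix (Fin p) (Fin n) ℝ) : ℕ :=
  sInf {k | (obsMat A C k).rank = (obsMat A C (k + 1)).rank}

/-- `(n', A', B', C', D')` is an explaining system for the data `(ud, yd)` and the
initial trajectory `(uini, yini)`, within the model class of order at most `N` and
lag at most `L`. -/
def Explaining {m p : ℕ} (L N T Tini : ℕ)
    (ud : Fin T → Fin m → ℝ) (yd : Fin T → Fin p → ℝ)
    (uini : Fin Tini → Fin m → ℝ) (yini : Fin Tini → Fin p → ℝ)
    {n' : ℕ} (A' : Matrix (Fin n') (Fin n') ℝ) (B' : Matrix (Fin n') (Fin m) ℝ)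
    (C' : Matrix (Fin p) (Fin n') ℝ) (D' : Matrix (Fin p) (Fin m) ℝ) : Prop :=
  n' ≤ N ∧ lag A' C' ≤ L ∧ IsTraj A' B' C' D' T ud yd ∧ IsTraj A' B' C' D' Tini uini yini

/-- The data `(ud, yd)` is informative for unique prediction of `uf` from
`(uini, yini)`: (i) every explaining system has exactly one response `yf` to `uf`
extending `(uini, yini)`, and (ii) some `yf` works for all explaining systems. -/
def Informative {m p : ℕ} (L N T Tini Tf : ℕ)
    (ud : Fin T → Fin m → ℝ) (yd : Fin T → Fin p → ℝ)
    (uini : Fin Tini → Fin m → ℝ) (yini : Fin Tini → Fin p → ℝ)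
    (uf : Fin Tf → Fin m → ℝ) : Prop :=
  (∀ (n' : ℕ) (A' : Matrix (Fin n') (Fin n') ℝ) (B' : Matrix (Fin n') (Fin m) ℝ)
      (C' : Matrix (Fin p) (Fin n') ℝ) (D' : Matrix (Fin p) (Fin m) ℝ),
      Explaining L N T Tini ud yd uini yini A' B' C' D' →
      ∃! yf : Fin Tf → Fin p → ℝ,
        IsTraj A' B' C' D' (Tini + Tf) (Fin.append uini uf) (Fin.append yini yf)) ∧
  (∃ yf : Fin Tf → Fin p → ℝ,
      ∀ (n' : ℕ) (A' : Matrix (Fin n') (Fin n') ℝ) (B' : Matrix (Fin n') (Fin m) ℝ)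
        (C' : Matrix (Fin p) (Fin n') ℝ) (D' : Matrix (Fin p) (Fin m) ℝ),
        Explaining L N T Tini ud yd uini yini A' B' C' D' →
        IsTraj A' B' C' D' (Tini + Tf) (Fin.append uini uf) (Fin.append yini yf))

/-- The concatenation of `w` (length `Tini`) with the first `t` values of `wf`:
the sequence `w^t` of length `Tini + t`. -/
def catUpTo {q Tini Tf : ℕ} (w : Fin Tini → Fin q → ℝ) (wf : Fin Tf → Fin q → ℝ)
    (t : Fin Tf) : Fin (Tini + (t : ℕ)) → Fin q → ℝ :=
  Fin.append w (fun s : Fin (t : ℕ) => wf ⟨s, by have := s.2; have := t.2; omega⟩)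

/-- The kernel-type submodule `{v | ∀ i < k, C A^i v = 0}`. -/
def Kspace {n p : ℕ} (A : Matrix (Fin n) (Fin n) ℝ) (C : Matrix (Fin p) (Fin n) ℝ)
    (k : ℕ) : Submodule ℝ (Fin n → ℝ) where
  carrier := {v | ∀ i < k, (C * A ^ i).mulVec v = 0}
  add_mem' := by
    intro a b ha hb i hi
    simp [Matrix.mulVec_add, ha i hi, hb i hi]
  zero_mem' := by intro i hi; simp
  smul_mem' := by
    intro c v hv i hi
    simp [Matrix.mulVec_smul, hv i hi]

lemma ker_eq_Kspace {n p : ℕ} (A : Matrix (Fin n) (Fin n) ℝ) (C : Matrix (Fin p) (Fin n) ℝ)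
    (k : ℕ) : LinearMap.ker (obsMat A C k).mulVecLin = Kspace A C k := by
  ext v
  constructor
  · intro h i hi
    funext r
    have := congrFun (LinearMap.mem_ker.mp h) (⟨i, hi⟩, r)
    simpa [obsMat, Matrix.mulVecLin_apply, Matrix.mulVec, dotProduct] using this
  · intro h
    refine LinearMap.mem_ker.mpr (funext fun ir => ?_)
    have := congrFun (h ir.1 ir.1.2) ir.2
    simpa [obsMat, Matrix.mulVecLin_apply, Matrix.mulVec, dotProduct] using this

lemma Kspace_antitone {n p : ℕ} (A : Matrix (Fin n) (Fin n) ℝ) (C : Matrix (Fin p) (Fin n) ℝ)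
    {k l : ℕ} (h : k ≤ l) : Kspace A C l ≤ Kspace A C k :=
  fun _ hv i hi => hv i (lt_of_lt_of_le hi h)

lemma finrank_ker_obs {n p : ℕ} (A : Matrix (Fin n) (Fin n) ℝ) (C : Matrix (Fin p) (Fin n) ℝ)
    (k : ℕ) : (obsMat A C k).rank + Module.finrank ℝ (Kspace A C k) = n := by
  have := LinearMap.finrank_range_add_finrank_ker (obsMat A C k).mulVecLin
  rw [ker_eq_Kspace] at this
  rw [Matrix.rank]
  rw [this, Module.finrank_pi]; simp
  -- this : rank + finrank K = finrank (Fin n → ℝ) = n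

lemma pow_mulVec_split {n p : ℕ} (A : Matrix (Fin n) (Fin n) ℝ) (C : Matrix (Fin p) (Fin n) ℝ)
    (j : ℕ) (v : Fin n → ℝ) :
    (C * A ^ (j + 1)).mulVec v = (C * A ^ j).mulVec (A.mulVec v) := by
  rw [Matrix.mulVec_mulVec, Matrix.mul_assoc, ← pow_succ]

lemma Kspace_succ_of_eq {n p : ℕ} (A : Matrix (Fin n) (Fin n) ℝ) (C : Matrix (Fin p) (Fin n) ℝ)
    {k : ℕ} (h : Kspace A C k = Kspace A C (k + 1)) :
    Kspace A C (k + 1) = Kspace A C (k + 2) := by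
  refine le_antisymm ?_ (Kspace_antitone A C (by omega))
  intro v hv i hi
  rcases Nat.lt_or_ge i (k + 1) with h1 | h1
  · exact hv i h1
  · have hik : i = k + 1 := by omega
    subst hik
    have hAv : A.mulVec v ∈ Kspace A C k := by
      intro j hj
      rw [← pow_mulVec_split]
      exact hv (j + 1) (by omega)
    rw [h] at hAv
    rw [pow_mulVec_split]
    exact hAv k (by omega)

/-- Kernel stabilization: if the lag is at most `ℓ`, then vanishing of `C A^i v`
for all `i < ℓ` forces vanishing of `C A^ℓ v`. -/
lemma ker_stab {n p : ℕ} (A : Matrix (Fin n) (Fin n) ℝ) (C : Matrix (Fin p) (Fin n) ℝ)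
    {ℓ : ℕ} (hlag : lag A C ≤ ℓ) (v : Fin n → ℝ)
    (hv : ∀ i < ℓ, (C * A ^ i).mulVec v = 0) : (C * A ^ ℓ).mulVec v = 0 := by
  -- the set defining the lag is nonempty
  have hne : {k | (obsMat A C k).rank = (obsMat A C (k + 1)).rank}.Nonempty := by
    by_contra hemp
    push_neg at hemp
    simp only [Set.eq_empty_iff_forall_notMem, Set.mem_setOf_eq] at hemp
    have hmono : ∀ k, (obsMat A C k).rank < (obsMat A C (k + 1)).rank := by
      intro k
      have h1 := finrank_ker_obs A C k
      have h2 := finrank_ker_obs A C (k + 1)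
      have h3 : Module.finrank ℝ (Kspace A C (k + 1)) ≤ Module.finrank ℝ (Kspace A C k) :=
        Submodule.finrank_mono (Kspace_antitone A C (by omega))
      have := hemp k
      omega
    have hgrow : ∀ k, k ≤ (obsMat A C k).rank := by
      intro k
      induction k with
      | zero => omega
      | succ k ih => have := hmono k; omega
    have := hgrow (n + 1)
    have := (obsMat A C (n + 1)).rank_le_card_width
    simp at this
    omega
  set k₀ := lag A C with hk₀
  have hmem : (obsMat A C k₀).rank = (obsMat A C (k₀ + 1)).rank := Nat.sInf_mem hne
  have hbase : Kspace A C k₀ = Kspace A C (k₀ + 1) := by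
    refine (Submodule.eq_of_le_of_finrank_le (Kspace_antitone A C (by omega)) ?_).symm
    have h1 := finrank_ker_obs A C k₀
    have h2 := finrank_ker_obs A C (k₀ + 1)
    omega
  have hall : ∀ j, k₀ ≤ j → Kspace A C j = Kspace A C (j + 1) := by
    intro j hj
    induction j, hj using Nat.le_induction with
    | base => exact hbase
    | succ j hj ih => exact Kspace_succ_of_eq A C ih
  have hvℓ : v ∈ Kspace A C (ℓ + 1) := by
    rw [← hall ℓ hlag]
    exact hv
  exact hvℓ ℓ (by omega)


/-- Value of `Fin.append` at a raw `Fin.mk`. -/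
lemma appendVal {α : Sort*} {a b : ℕ} (u : Fin a → α) (v : Fin b → α) (k : ℕ) (hk : k < a + b) :
    Fin.append u v ⟨k, hk⟩ = if h : k < a then u ⟨k, h⟩ else v ⟨k - a, by omega⟩ := by
  split_ifs with h
  · have e : (⟨k, hk⟩ : Fin (a + b)) = Fin.castAdd b ⟨k, h⟩ := rfl
    rw [e, Fin.append_left]
  · have e : (⟨k, hk⟩ : Fin (a + b)) = Fin.natAdd a ⟨k - a, by omega⟩ := by
      apply Fin.ext; simp; omega
    rw [e, Fin.append_right]

/-- The state sequence generated by recursion from `x0` with input `U`. -/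
def stateSeq {n m : ℕ} (A : Matrix (Fin n) (Fin n) ℝ) (B : Matrix (Fin n) (Fin m) ℝ)
    (x0 : Fin n → ℝ) (U : ℕ → Fin m → ℝ) : ℕ → Fin n → ℝ
  | 0 => x0
  | (k + 1) => A.mulVec (stateSeq A B x0 U k) + B.mulVec (U k)

lemma stateSeq_succ {n m : ℕ} (A : Matrix (Fin n) (Fin n) ℝ) (B : Matrix (Fin n) (Fin m) ℝ)
    (x0 : Fin n → ℝ) (U : ℕ → Fin m → ℝ) (k : ℕ) :
    stateSeq A B x0 U (k + 1) = A.mulVec (stateSeq A B x0 U k) + B.mulVec (U k) := rfl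

lemma mulVec_finsum {n q : ℕ} {κ : Type*} [Fintype κ] (M : Matrix (Fin q) (Fin n) ℝ)
    (f : κ → Fin n → ℝ) : M.mulVec (∑ j, f j) = ∑ j, M.mulVec (f j) := by
  have := map_sum M.mulVecLin f Finset.univ
  exact this


def extF {q : ℕ} (T : ℕ) (w : Fin T → Fin q → ℝ) : ℕ → Fin q → ℝ :=
  fun k => if h : k < T then w ⟨k, h⟩ else 0

lemma extF_eq {q T : ℕ} (w : Fin T → Fin q → ℝ) (k : ℕ) (h : k < T) :
    w ⟨k, h⟩ = extF T w k := by unfold extF; rw [dif_pos h]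

/-- Step-by-step prediction and weaving: if at each time `t` the next sample
`(u^t last ℓ, uf t; y^t last ℓ, yf t)` lies in the image of the depth-`(ℓ+1)` Hankel
matrices of the data and of the extended initial trajectory `(u^t, y^t)`, then every
explaining system has `(uini·uf, yini·yf)` as a trajectory, `yf` is the unique such
output for each explaining system, and the data is informative for unique prediction. -/
theorem predict_and_weave_informative {m p : ℕ} (L N T Tini Tf ℓ : ℕ) (hTf : 1 ≤ Tf)
    (ud : Fin T → Fin m → ℝ) (yd : Fin T → Fin p → ℝ)
    (uini : Fin Tini → Fin m → ℝ) (yini : Fin Tini → Fin p → ℝ)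
    (uf : Fin Tf → Fin m → ℝ)
    (hTini : ℓ ≤ Tini)
    (hℓ : ∀ (n' : ℕ) (A' : Matrix (Fin n') (Fin n') ℝ) (B' : Matrix (Fin n') (Fin m) ℝ)
      (C' : Matrix (Fin p) (Fin n') ℝ) (D' : Matrix (Fin p) (Fin m) ℝ),
      Explaining L N T Tini ud yd uini yini A' B' C' D' → lag A' C' ≤ ℓ)
    (yf : Fin Tf → Fin p → ℝ)
    (hstep : ∀ t : Fin Tf,
      ∃ (g₁ : Fin (T - ℓ) → ℝ) (g₂ : Fin (Tini + (t : ℕ) - ℓ) → ℝ),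
        (∀ i : Fin (ℓ + 1),
          (∑ j : Fin (T - ℓ),
              g₁ j • ud ⟨i + j, by have := i.2; have := j.2; omega⟩) +
          (∑ j : Fin (Tini + (t : ℕ) - ℓ),
              g₂ j • catUpTo uini uf t ⟨i + j, by have := i.2; have := j.2; omega⟩) =
          Fin.append
            (fun r : Fin ℓ =>
              catUpTo uini uf t ⟨Tini + (t : ℕ) - ℓ + r, by have := r.2; omega⟩)
            (fun _ : Fin 1 => uf t) i) ∧
        (∀ i : Fin (ℓ + 1),
          (∑ j : Fin (T - ℓ),
              g₁ j • yd ⟨i + j, by have := i.2; have := j.2; omega⟩) +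
          (∑ j : Fin (Tini + (t : ℕ) - ℓ),
              g₂ j • catUpTo yini yf t ⟨i + j, by have := i.2; have := j.2; omega⟩) =
          Fin.append
            (fun r : Fin ℓ =>
              catUpTo yini yf t ⟨Tini + (t : ℕ) - ℓ + r, by have := r.2; omega⟩)
            (fun _ : Fin 1 => yf t) i)) :
    (∀ (n' : ℕ) (A' : Matrix (Fin n') (Fin n') ℝ) (B' : Matrix (Fin n') (Fin m) ℝ)
        (C' : Matrix (Fin p) (Fin n') ℝ) (D' : Matrix (Fin p) (Fin m) ℝ),
        Explaining L N T Tini ud yd uini yini A' B' C' D' →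
        IsTraj A' B' C' D' (Tini + Tf) (Fin.append uini uf) (Fin.append yini yf) ∧
        ∀ yf' : Fin Tf → Fin p → ℝ,
          IsTraj A' B' C' D' (Tini + Tf) (Fin.append uini uf) (Fin.append yini yf') →
          yf' = yf) ∧
    Informative L N T Tini Tf ud yd uini yini uf := by
  have key : ∀ (n' : ℕ) (A : Matrix (Fin n') (Fin n') ℝ) (B : Matrix (Fin n') (Fin m) ℝ)
      (C : Matrix (Fin p) (Fin n') ℝ) (D : Matrix (Fin p) (Fin m) ℝ),
      Explaining L N T Tini ud yd uini yini A B C D →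
      IsTraj A B C D (Tini + Tf) (Fin.append uini uf) (Fin.append yini yf) ∧
      ∀ yf' : Fin Tf → Fin p → ℝ,
        IsTraj A B C D (Tini + Tf) (Fin.append uini uf) (Fin.append yini yf') → yf' = yf := by
    intro n' A B C D hE
    have hlagℓ : lag A C ≤ ℓ := hℓ n' A B C D hE
    obtain ⟨-, -, ⟨xd, hxd⟩, ⟨xi, hxi⟩⟩ := hE
    -- ℕ-indexed recursions for the data trajectory
    have hXdrec : ∀ k, k < T → extF (T+1) xd (k+1) =
        A.mulVec (extF (T+1) xd k) + B.mulVec (extF T ud k) := by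
      intro k hk
      rw [← extF_eq xd (k+1) (by omega), ← extF_eq xd k (by omega), ← extF_eq ud k hk]
      exact (hxd ⟨k, hk⟩).1
    have hYdrec : ∀ k, k < T → extF T yd k =
        C.mulVec (extF (T+1) xd k) + D.mulVec (extF T ud k) := by
      intro k hk
      rw [← extF_eq yd k hk, ← extF_eq xd k (by omega), ← extF_eq ud k hk]
      exact (hxd ⟨k, hk⟩).2
    -- the extended input and state
    set Uc : ℕ → Fin m → ℝ := extF (Tini + Tf) (Fin.append uini uf) with hUcDef
    set X : ℕ → Fin n' → ℝ := stateSeq A B (xi 0) Uc with hXDef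
    have hXsucc : ∀ k, X (k+1) = A.mulVec (X k) + B.mulVec (Uc k) :=
      fun k => stateSeq_succ A B (xi 0) Uc k
    have hUini : ∀ k, (hk : k < Tini) → Uc k = uini ⟨k, hk⟩ := by
      intro k hk
      rw [hUcDef, ← extF_eq _ k (by omega), appendVal, dif_pos hk]
    have hUf : ∀ (k : ℕ) (h1 : Tini ≤ k) (h2 : k < Tini + Tf),
        Uc k = uf ⟨k - Tini, by omega⟩ := by
      intro k h1 h2
      rw [hUcDef, ← extF_eq _ k (by omega), appendVal, dif_neg (by omega)]
    have hXxi : ∀ k, (hk : k ≤ Tini) → X k = xi ⟨k, by omega⟩ := by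
      intro k
      induction k with
      | zero =>
        intro _
        show xi 0 = _
        congr 1
      | succ k ih =>
        intro hk
        rw [hXsucc, ih (by omega), hUini k (by omega)]
        exact ((hxi ⟨k, by omega⟩).1).symm
    have hYini : ∀ k, (hk : k < Tini) →
        C.mulVec (X k) + D.mulVec (Uc k) = yini ⟨k, hk⟩ := by
      intro k hk
      rw [hXxi k (by omega), hUini k hk]
      exact ((hxi ⟨k, hk⟩).2).symm
    -- main step-by-step prediction
    have H : ∀ s : ℕ, ∀ t : Fin Tf, (t : ℕ) = s →
        yf t = C.mulVec (X (Tini + (t : ℕ))) + D.mulVec (Uc (Tini + (t : ℕ))) := by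
      intro s
      induction s using Nat.strong_induction_on with
      | _ s IH =>
      intro t hts
      subst hts
      obtain ⟨g₁, g₂, hu, hy⟩ := hstep t
      have hcatU : ∀ (k : ℕ) (hk : k < Tini + (t : ℕ)),
          catUpTo uini uf t ⟨k, hk⟩ = Uc k := by
        intro k hk
        show Fin.append uini _ ⟨k, hk⟩ = Uc k
        rw [appendVal]
        split_ifs with h
        · exact (hUini k h).symm
        · rw [hUf k (by omega) (by have := t.2; omega)]
      have hcatY : ∀ (k : ℕ) (hk : k < Tini + (t : ℕ)),
          catUpTo yini yf t ⟨k, hk⟩ = C.mulVec (X k) + D.mulVec (Uc k) := by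
        intro k hk
        show Fin.append yini _ ⟨k, hk⟩ = _
        rw [appendVal]
        split_ifs with h
        · exact (hYini k h).symm
        · have h2 := IH (k - Tini) (by omega) ⟨k - Tini, by have := t.2; omega⟩ rfl
          rw [show Tini + ((⟨k - Tini, by have := t.2; omega⟩ : Fin Tf) : ℕ) = k
            from by simp; omega] at h2
          exact h2
      simp only [hcatU, extF_eq ud] at hu
      simp only [hcatY, hcatU, extF_eq yd] at hy
      set vC : ℕ → Fin m → ℝ := fun i =>
        (∑ j : Fin (T - ℓ), g₁ j • extF T ud (i + (j : ℕ))) +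
        (∑ j : Fin (Tini + (t : ℕ) - ℓ), g₂ j • Uc (i + (j : ℕ))) with hvCDef
      set zC : ℕ → Fin p → ℝ := fun i =>
        (∑ j : Fin (T - ℓ), g₁ j • extF T yd (i + (j : ℕ))) +
        (∑ j : Fin (Tini + (t : ℕ) - ℓ), g₂ j •
          (C.mulVec (X (i + (j : ℕ))) + D.mulVec (Uc (i + (j : ℕ))))) with hzCDef
      set xiC : ℕ → Fin n' → ℝ := fun i =>
        (∑ j : Fin (T - ℓ), g₁ j • extF (T+1) xd (i + (j : ℕ))) +
        (∑ j : Fin (Tini + (t : ℕ) - ℓ), g₂ j • X (i + (j : ℕ))) with hxiCDef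
      -- window values of the combination
      have hvC : ∀ (i : ℕ) (hi : i < ℓ), vC i = Uc (Tini + (t : ℕ) - ℓ + i) := by
        intro i hi
        have h := hu ⟨i, by omega⟩
        simp only [Fin.val_mk] at h
        rw [appendVal, dif_pos hi] at h
        exact h
      have hvCl : vC ℓ = uf t := by
        have h := hu ⟨ℓ, by omega⟩
        simp only [Fin.val_mk] at h
        rw [appendVal, dif_neg (by omega)] at h
        exact h
      have hzC : ∀ (i : ℕ) (hi : i < ℓ), zC i =
          C.mulVec (X (Tini + (t : ℕ) - ℓ + i)) + D.mulVec (Uc (Tini + (t : ℕ) - ℓ + i)) := by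
        intro i hi
        have h := hy ⟨i, by omega⟩
        simp only [Fin.val_mk] at h
        rw [appendVal, dif_pos hi] at h
        exact h
      have hzCl : zC ℓ = yf t := by
        have h := hy ⟨ℓ, by omega⟩
        simp only [Fin.val_mk] at h
        rw [appendVal, dif_neg (by omega)] at h
        exact h
      -- the combination is itself a trajectory
      have hxiCrec : ∀ (i : ℕ), i ≤ ℓ → xiC (i+1) = A.mulVec (xiC i) + B.mulVec (vC i) := by
        intro i hi
        have e1 : ∀ j : Fin (T - ℓ), extF (T+1) xd (i + 1 + (j : ℕ))
            = A.mulVec (extF (T+1) xd (i + (j : ℕ))) + B.mulVec (extF T ud (i + (j : ℕ))) := by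
          intro j
          rw [show i + 1 + (j : ℕ) = (i + (j : ℕ)) + 1 by omega]
          exact hXdrec (i + (j : ℕ)) (by have := j.2; omega)
        have e2 : ∀ j : Fin (Tini + (t : ℕ) - ℓ), X (i + 1 + (j : ℕ))
            = A.mulVec (X (i + (j : ℕ))) + B.mulVec (Uc (i + (j : ℕ))) := by
          intro j
          rw [show i + 1 + (j : ℕ) = (i + (j : ℕ)) + 1 by omega]
          exact hXsucc (i + (j : ℕ))
        calc xiC (i+1)
            = (∑ j : Fin (T - ℓ), g₁ j • (A.mulVec (extF (T+1) xd (i + (j : ℕ)))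
                + B.mulVec (extF T ud (i + (j : ℕ)))))
            + (∑ j : Fin (Tini + (t : ℕ) - ℓ), g₂ j • (A.mulVec (X (i + (j : ℕ)))
                + B.mulVec (Uc (i + (j : ℕ))))) := by
              simp only [hxiCDef]
              exact congrArg₂ (· + ·)
                (Finset.sum_congr rfl fun j _ => by rw [e1 j])
                (Finset.sum_congr rfl fun j _ => by rw [e2 j])
          _ = A.mulVec (xiC i) + B.mulVec (vC i) := by
              simp only [hxiCDef, hvCDef, Matrix.mulVec_add, mulVec_finsum,
                Matrix.mulVec_smul, smul_add, Finset.sum_add_distrib]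
              abel
      have hzCout : ∀ (i : ℕ), i ≤ ℓ → zC i = C.mulVec (xiC i) + D.mulVec (vC i) := by
        intro i hi
        have e1 : ∀ j : Fin (T - ℓ), extF T yd (i + (j : ℕ))
            = C.mulVec (extF (T+1) xd (i + (j : ℕ))) + D.mulVec (extF T ud (i + (j : ℕ))) :=
          fun j => hYdrec (i + (j : ℕ)) (by have := j.2; omega)
        calc zC i
            = (∑ j : Fin (T - ℓ), g₁ j • (C.mulVec (extF (T+1) xd (i + (j : ℕ)))
                + D.mulVec (extF T ud (i + (j : ℕ)))))
            + (∑ j : Fin (Tini + (t : ℕ) - ℓ), g₂ j • (C.mulVec (X (i + (j : ℕ)))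
                + D.mulVec (Uc (i + (j : ℕ))))) := by
              simp only [hzCDef]
              exact congrArg₂ (· + ·)
                (Finset.sum_congr rfl fun j _ => by rw [e1 j]) rfl
          _ = C.mulVec (xiC i) + D.mulVec (vC i) := by
              simp only [hxiCDef, hvCDef, Matrix.mulVec_add, mulVec_finsum,
                Matrix.mulVec_smul, smul_add, Finset.sum_add_distrib]
              abel
      -- the error state
      set dC : ℕ → Fin n' → ℝ := fun i => X (Tini + (t : ℕ) - ℓ + i) - xiC i with hdCDef
      have hdrec : ∀ (i : ℕ), i < ℓ → dC (i+1) = A.mulVec (dC i) := by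
        intro i hi
        simp only [hdCDef]
        rw [show Tini + (t : ℕ) - ℓ + (i+1) = (Tini + (t : ℕ) - ℓ + i) + 1 by omega,
          hXsucc, hxiCrec i (le_of_lt hi), hvC i hi, Matrix.mulVec_sub]
        abel
      have hdpow : ∀ (i : ℕ), i ≤ ℓ → dC i = (A ^ i).mulVec (dC 0) := by
        intro i
        induction i with
        | zero => intro _; simp [Matrix.one_mulVec]
        | succ i ihp =>
          intro hi
          rw [hdrec i (by omega), ihp (by omega), Matrix.mulVec_mulVec, ← pow_succ']
      have hCd : ∀ (i : ℕ), i < ℓ → C.mulVec (dC i) = 0 := by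
        intro i hi
        have h1 := hzC i hi
        have h2 := hzCout i (le_of_lt hi)
        rw [hvC i hi] at h2
        have h3 : C.mulVec (X (Tini + (t : ℕ) - ℓ + i)) = C.mulVec (xiC i) := by
          have h4 := h1.symm.trans h2
          have h5 := congrArg (fun z => z - D.mulVec (Uc (Tini + (t : ℕ) - ℓ + i))) h4
          simpa using h5
        simp only [hdCDef]
        rw [Matrix.mulVec_sub, h3, sub_self]
      have hCdl : C.mulVec (dC ℓ) = 0 := by
        have hCA : ∀ i < ℓ, (C * A ^ i).mulVec (dC 0) = 0 := by
          intro i hi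
          rw [← Matrix.mulVec_mulVec, ← hdpow i (le_of_lt hi)]
          exact hCd i hi
        have hks := ker_stab A C hlagℓ (dC 0) hCA
        rw [hdpow ℓ le_rfl, Matrix.mulVec_mulVec]
        exact hks
      have hfin : C.mulVec (X (Tini + (t : ℕ) - ℓ + ℓ)) = C.mulVec (xiC ℓ) := by
        have h6 := hCdl
        simp only [hdCDef, Matrix.mulVec_sub] at h6
        exact sub_eq_zero.mp h6
      have e : Tini + (t : ℕ) - ℓ + ℓ = Tini + (t : ℕ) := by omega
      have hUfin : Uc (Tini + (t : ℕ)) = uf t := by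
        rw [hUf (Tini + (t : ℕ)) (by omega) (by have := t.2; omega)]
        exact congrArg uf (Fin.ext (by simp))
      calc yf t = zC ℓ := hzCl.symm
        _ = C.mulVec (xiC ℓ) + D.mulVec (vC ℓ) := hzCout ℓ le_rfl
        _ = C.mulVec (X (Tini + (t : ℕ))) + D.mulVec (Uc (Tini + (t : ℕ))) := by
            rw [← hfin, e, hvCl, hUfin]
    have hmain : ∀ t : Fin Tf,
        yf t = C.mulVec (X (Tini + (t : ℕ))) + D.mulVec (Uc (Tini + (t : ℕ))) :=
      fun t => H (t : ℕ) t rfl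
    -- existence
    have hexist : IsTraj A B C D (Tini + Tf) (Fin.append uini uf) (Fin.append yini yf) := by
      refine ⟨fun r => X (r : ℕ), fun t => ⟨?_, ?_⟩⟩
      · show X ((t.succ : Fin (Tini + Tf + 1)) : ℕ) = _
        rw [Fin.val_succ, hXsucc]
        congr 1
        show B.mulVec (Uc (t : ℕ)) = _
        exact congrArg B.mulVec ((extF_eq (Fin.append uini uf) (t : ℕ) t.2).symm)
      · show Fin.append yini yf t = C.mulVec (X ((t.castSucc : Fin (Tini + Tf + 1)) : ℕ))
          + D.mulVec (Fin.append uini uf t)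
        rw [Fin.coe_castSucc]
        have hUt : Fin.append uini uf t = Uc (t : ℕ) := extF_eq (Fin.append uini uf) (t : ℕ) t.2
        rw [hUt]
        have ht : Fin.append yini yf (⟨(t : ℕ), t.2⟩ : Fin (Tini + Tf)) =
            C.mulVec (X (t : ℕ)) + D.mulVec (Uc (t : ℕ)) := by
          rw [appendVal]
          split_ifs with h
          · exact (hYini (t : ℕ) h).symm
          · have h2 := hmain ⟨(t : ℕ) - Tini, by have := t.2; omega⟩
            simp only [Fin.val_mk] at h2
            rw [show Tini + ((t : ℕ) - Tini) = (t : ℕ) by omega] at h2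
            exact h2
        exact ht
    -- uniqueness
    have huniq : ∀ yf' : Fin Tf → Fin p → ℝ,
        IsTraj A B C D (Tini + Tf) (Fin.append uini uf) (Fin.append yini yf') → yf' = yf := by
      rintro yf' ⟨x', hx'⟩
      set dE : ℕ → Fin n' → ℝ :=
        fun k => if h : k ≤ Tini + Tf then x' ⟨k, by omega⟩ - X k else 0 with hdEDef
      have hdE : ∀ (k : ℕ) (hk : k ≤ Tini + Tf), dE k = x' ⟨k, by omega⟩ - X k := by
        intro k hk
        simp only [hdEDef]
        rw [dif_pos hk]
      have hdErec : ∀ (k : ℕ), k < Tini + Tf → dE (k+1) = A.mulVec (dE k) := by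
        intro k hk
        have h := (hx' ⟨k, hk⟩).1
        simp only [Fin.succ_mk, Fin.castSucc_mk] at h
        rw [extF_eq (Fin.append uini uf) k hk] at h
        rw [hdE (k+1) (by omega), hdE k (by omega), h, hXsucc, Matrix.mulVec_sub]
        abel
      have hdEpow : ∀ (k i : ℕ), k + i ≤ Tini + Tf → dE (k + i) = (A ^ i).mulVec (dE k) := by
        intro k i
        induction i with
        | zero => intro _; simp [Matrix.one_mulVec]
        | succ i ihp =>
          intro hk
          rw [show k + (i+1) = (k+i) + 1 by omega, hdErec (k+i) (by omega), ihp (by omega),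
            Matrix.mulVec_mulVec, ← pow_succ']
      have hCdE : ∀ (k : ℕ), k < Tini + Tf → C.mulVec (dE k) = 0 := by
        intro k
        induction k using Nat.strong_induction_on with
        | _ k IH =>
        intro hk
        rcases Nat.lt_or_ge k Tini with hkT | hkT
        · have h := (hx' ⟨k, hk⟩).2
          simp only [Fin.castSucc_mk] at h
          rw [extF_eq (Fin.append uini uf) k hk] at h
          rw [appendVal, dif_pos hkT] at h
          have h2 := hYini k hkT
          have h3 : C.mulVec (x' ⟨k, by omega⟩) = C.mulVec (X k) := by
            have h4 := h2.trans h
            have h5 := congrArg (fun z => z - D.mulVec (Uc k)) h4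
            simpa [← hUcDef] using h5.symm
          rw [hdE k (by omega), Matrix.mulVec_sub, h3, sub_self]
        · have h0 : k - ℓ + ℓ = k := by omega
          have hCA : ∀ i < ℓ, (C * A ^ i).mulVec (dE (k - ℓ)) = 0 := by
            intro i hi
            rw [← Matrix.mulVec_mulVec, ← hdEpow (k - ℓ) i (by omega)]
            exact IH (k - ℓ + i) (by omega) (by omega)
          have hks := ker_stab A C hlagℓ (dE (k - ℓ)) hCA
          rw [← h0, hdEpow (k - ℓ) ℓ (by omega), Matrix.mulVec_mulVec]
          exact hks
      funext t'
      have ha := (hx' ⟨Tini + (t' : ℕ), by have := t'.2; omega⟩).2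
      simp only [Fin.castSucc_mk] at ha
      rw [extF_eq (Fin.append uini uf) (Tini + (t' : ℕ)) (by have := t'.2; omega)] at ha
      rw [appendVal, dif_neg (by omega)] at ha
      have he : (⟨Tini + (t' : ℕ) - Tini, by have := t'.2; omega⟩ : Fin Tf) = t' :=
        Fin.ext (by simp)
      rw [he] at ha
      have hb := hmain t'
      have hc := hCdE (Tini + (t' : ℕ)) (by have := t'.2; omega)
      rw [hdE (Tini + (t' : ℕ)) (by omega), Matrix.mulVec_sub, sub_eq_zero] at hc
      have hUfin : Uc (Tini + (t' : ℕ)) = uf t' := by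
        rw [hUf (Tini + (t' : ℕ)) (by omega) (by have := t'.2; omega)]
        exact congrArg uf (Fin.ext (by simp))
      rw [ha, hb, hc, ← hUcDef, hUfin]
    exact ⟨hexist, huniq⟩
  refine ⟨key, ?_, ?_⟩
  · intro n' A' B' C' D' hE
    obtain ⟨h1, h2⟩ := key n' A' B' C' D' hE
    exact ⟨yf, h1, fun y' hy' => h2 y' hy'⟩
  · exact ⟨yf, fun n' A' B' C' D' hE => (key n' A' B' C' D' hE).1⟩
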